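/- Let F be a field of characteristic 0 and let A = F[x₁,...,xₙ,y₁,...,yₙ]. Fix integers 1 ≤ n₁ ≤ n₂ ≤ n and define the twisted representation of sl(n) on A by π(E_{i,j}) = E^x_{i,j} − E^y_{j,i}, where E^x_{i,j} = −x_j∂_{x_i} − δ_{ij} if i,j ≤ n₁; = ∂_{x_i}∂_{x_j} if i ≤ n₁ < j; = −x_i x_j if j ≤ n₁ < i; = x_i∂_{x_j} if i,j > n₁; and E^y_{i,j} = y_i∂_{y_j} if i,j ≤ n₂; = −y_i y_j if i ≤ n₂ < j; = ∂_{y_i}∂_{y_j} if j ≤ n₂ < i; = −y_j∂_{y_i} − δ_{ij} if i,j > n₂. Then π is a Lie algebra homomorphism: π([E_{i,j}, E_{k,l}]) = [π(E_{i,j}), π(E_{k,l})] for all i≠j and k≠l. -/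

import Mathlib

open MvPolynomial

namespace Stmt2

variable (F : Type*) [Field F] [CharZero F] (n n₁ n₂ : ℕ)

/-- The polynomial algebra `A = F[x₁,...,xₙ,y₁,...,yₙ]`: `x i = X (Sum.inl i)`,
`y i = X (Sum.inr i)`.  Indices are 0-based: the variable `x_i` of the paper
(`1 ≤ i ≤ n`) corresponds to `Sum.inl ⟨i-1⟩`. -/
abbrev A := MvPolynomial (Fin n ⊕ Fin n) F

noncomputable def xv (i : Fin n) : A F n := X (Sum.inl i)
noncomputable def yv (i : Fin n) : A F n := X (Sum.inr i)

/-- Multiplication operator by a polynomial. -/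
noncomputable def mul (f : A F n) : Module.End F (A F n) := LinearMap.mulLeft F f

/-- `∂_{x_i}`. -/
noncomputable def pdx (i : Fin n) : Module.End F (A F n) :=
  (pderiv (Sum.inl i : Fin n ⊕ Fin n)).toLinearMap

/-- `∂_{y_i}`. -/
noncomputable def pdy (i : Fin n) : Module.End F (A F n) :=
  (pderiv (Sum.inr i : Fin n ⊕ Fin n)).toLinearMap

/-- `E^x_{i,j}` (1-based condition `i ≤ n₁` becomes `(i:ℕ) < n₁`). -/
noncomputable def Ex (i j : Fin n) : Module.End F (A F n) :=
  if (i : ℕ) < n₁ then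
    (if (j : ℕ) < n₁ then
      -(mul F n (xv F n j) * pdx F n i) - (if i = j then 1 else 0)
    else pdx F n i * pdx F n j)
  else
    (if (j : ℕ) < n₁ then -(mul F n (xv F n i * xv F n j))
    else mul F n (xv F n i) * pdx F n j)

/-- `E^y_{i,j}` (1-based condition `i ≤ n₂` becomes `(i:ℕ) < n₂`). -/
noncomputable def Ey (i j : Fin n) : Module.End F (A F n) :=
  if (i : ℕ) < n₂ then
    (if (j : ℕ) < n₂ then mul F n (yv F n i) * pdy F n j
    else -(mul F n (yv F n i * yv F n j)))
  else
    (if (j : ℕ) < n₂ then pdy F n i * pdy F n j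
    else -(mul F n (yv F n j) * pdy F n i) - (if i = j then 1 else 0))

/-- The twisted oscillator representation `π(E_{i,j}) = E^x_{i,j} − E^y_{j,i}`. -/
noncomputable def π (i j : Fin n) : Module.End F (A F n) :=
  Ex F n n₁ i j - Ey F n n₂ j i


-- ======================================================================
-- Auxiliary infrastructure
-- ======================================================================

end Stmt2

namespace Aux
variable {R : Type*} [CommRing R] {σ : Type*}

theorem pderivComm (a b : σ) (f : MvPolynomial σ R) :
    pderiv a (pderiv b f) = pderiv b (pderiv a f) := by
  classical
  induction f using MvPolynomial.induction_on with
  | C r => simp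
  | add p q hp hq => simp [hp, hq]
  | mul_X p s hp =>
    simp only [pderiv_mul, map_add, pderiv_X, Pi.single_apply, hp,
      apply_ite (pderiv a), apply_ite (pderiv b), pderiv_one, map_zero, ite_self]
    ring

noncomputable def M (p : MvPolynomial σ R) : Module.End R (MvPolynomial σ R) :=
  LinearMap.mulLeft R p

noncomputable def D (a : σ) : Module.End R (MvPolynomial σ R) :=
  (pderiv a).toLinearMap

@[simp] theorem M_apply (p g : MvPolynomial σ R) : M p g = p * g := rfl
@[simp] theorem D_apply (a : σ) (g : MvPolynomial σ R) : D a g = pderiv a g := rfl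

theorem MmulM (p q : MvPolynomial σ R) : M p * M q = M (p * q) := by
  apply LinearMap.ext; intro g; simp [Module.End.mul_apply, mul_assoc]

theorem Dcomm (a b : σ) : (D a * D b : Module.End R (MvPolynomial σ R)) = D b * D a := by
  apply LinearMap.ext; intro g; simp [Module.End.mul_apply, pderivComm a b]

theorem DM (a : σ) (p : MvPolynomial σ R) :
    D a * M p = M p * D a + M (pderiv a p) := by
  apply LinearMap.ext; intro g
  simp [Module.End.mul_apply, pderiv_mul]; ring

theorem GA (p q : MvPolynomial σ R) (a b : σ) :
    (M p * D a) * (M q * D b) - (M q * D b) * (M p * D a)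
      = M (p * pderiv a q) * D b - M (q * pderiv b p) * D a := by
  apply LinearMap.ext; intro g
  simp only [LinearMap.sub_apply, Module.End.mul_apply, M_apply, D_apply, pderiv_mul]
  rw [pderivComm b a g]; ring

theorem GB (p : MvPolynomial σ R) (a b c : σ) :
    (D b * D c) * (M p * D a) - (M p * D a) * (D b * D c)
      = M (pderiv b p) * (D c * D a) + M (pderiv c p) * (D b * D a)
        + M (pderiv b (pderiv c p)) * D a := by
  apply LinearMap.ext; intro g
  simp only [LinearMap.sub_apply, LinearMap.add_apply, Module.End.mul_apply, M_apply, D_apply,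
    pderiv_mul, map_add]
  rw [pderivComm a b (pderiv c g), pderivComm a c g]; ring

theorem GC (p q : MvPolynomial σ R) (a : σ) :
    (M p * D a) * M q - M q * (M p * D a) = M (p * pderiv a q) := by
  apply LinearMap.ext; intro g
  simp only [LinearMap.sub_apply, Module.End.mul_apply, M_apply, D_apply, pderiv_mul]; ring

theorem GD (q : MvPolynomial σ R) (a b : σ) :
    (D a * D b) * M q - M q * (D a * D b)
      = M (pderiv a q) * D b + M (pderiv b q) * D a + M (pderiv a (pderiv b q)) := by
  apply LinearMap.ext; intro g
  simp only [LinearMap.sub_apply, LinearMap.add_apply, Module.End.mul_apply, M_apply, D_apply,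
    pderiv_mul, map_add]
  ring

theorem GE (p q : MvPolynomial σ R) : M p * M q - M q * M p = 0 := by
  rw [MmulM, MmulM, mul_comm p q, sub_self]

theorem GF (a b c d : σ) :
    (D a * D b) * (D c * D d) - (D c * D d) * (D a * D b)
      = (0 : Module.End R (MvPolynomial σ R)) := by
  apply LinearMap.ext; intro g
  simp only [LinearMap.sub_apply, Module.End.mul_apply, D_apply, LinearMap.zero_apply]
  rw [pderivComm b c, pderivComm a c, pderivComm b d, pderivComm a d, sub_self]

theorem M_zero : (M 0 : Module.End R (MvPolynomial σ R)) = 0 := by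
  apply LinearMap.ext; intro g; simp

theorem M_one : (M 1 : Module.End R (MvPolynomial σ R)) = 1 := by
  apply LinearMap.ext; intro g; simp

section P
variable {ι : Type*} [DecidableEq ι]

noncomputable def P (c : ι → Prop) [DecidablePred c] (v : ι → σ) (i j : ι) :
    Module.End R (MvPolynomial σ R) :=
  if c i then
    (if c j then -(M (R := R) (X (v j)) * D (v i)) - (if i = j then 1 else 0)
     else D (R := R) (v i) * D (v j))
  else
    (if c j then -(M (R := R) (X (v i) * X (v j)))
    else M (R := R) (X (v i)) * D (v j))

theorem central (i j : ι) (z : Module.End R (MvPolynomial σ R)) :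
    (if i = j then (1 : Module.End R (MvPolynomial σ R)) else 0) * z
      = z * (if i = j then 1 else 0) := by split <;> simp

theorem br_cc {S : Type*} [Ring S] (X Y s t : S) (hs : ∀ z, s * z = z * s)
    (ht : ∀ z, t * z = z * t) :
    (-X - s) * (-Y - t) - (-Y - t) * (-X - s) = X * Y - Y * X := by
  simp only [sub_mul, mul_sub, neg_mul, mul_neg, neg_neg, sub_neg_eq_add]
  rw [hs Y, ht X, hs t]; abel

theorem br_cl {S : Type*} [Ring S] (X Y s : S) (hs : ∀ z, s * z = z * s) :
    (-X - s) * Y - Y * (-X - s) = Y * X - X * Y := by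
  simp only [sub_mul, mul_sub, neg_mul, mul_neg, neg_neg, sub_neg_eq_add]
  rw [hs Y]; abel

theorem br_cr {S : Type*} [Ring S] (X Y t : S) (ht : ∀ z, t * z = z * t) :
    X * (-Y - t) - (-Y - t) * X = Y * X - X * Y := by
  simp only [sub_mul, mul_sub, neg_mul, mul_neg, neg_neg, sub_neg_eq_add]
  rw [ht X]; abel

theorem br_cn {S : Type*} [Ring S] (X Y s : S) (hs : ∀ z, s * z = z * s) :
    (-X - s) * (-Y) - (-Y) * (-X - s) = X * Y - Y * X := by
  simp only [sub_mul, mul_sub, neg_mul, mul_neg, neg_neg, sub_neg_eq_add, neg_sub]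
  rw [hs Y]; abel

theorem br_nc {S : Type*} [Ring S] (X Y t : S) (ht : ∀ z, t * z = z * t) :
    (-X) * (-Y - t) - (-Y - t) * (-X) = X * Y - Y * X := by
  simp only [sub_mul, mul_sub, neg_mul, mul_neg, neg_neg, sub_neg_eq_add, neg_sub]
  rw [ht X]; abel

theorem br_nl {S : Type*} [Ring S] (X Y : S) :
    (-X) * Y - Y * (-X) = Y * X - X * Y := by noncomm_ring

theorem br_nr {S : Type*} [Ring S] (X Y : S) :
    X * (-Y) - (-Y) * X = Y * X - X * Y := by noncomm_ring

theorem br_nn {S : Type*} [Ring S] (X Y : S) :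
    (-X) * (-Y) - (-Y) * (-X) = X * Y - Y * X := by noncomm_ring

theorem pdX {v : ι → σ} (hv : Function.Injective v) (a b : ι) :
    pderiv (v a) (X (v b) : MvPolynomial σ R) = if a = b then 1 else 0 := by
  by_cases h : a = b
  · subst h; simp
  · rw [if_neg h, pderiv_X_of_ne fun he => h (hv he).symm]

theorem pd_ite (w : σ) (Q : Prop) [Decidable Q] :
    pderiv w (if Q then (1 : MvPolynomial σ R) else 0) = 0 := by split <;> simp

set_option maxHeartbeats 2000000 in
theorem P_bracket (c : ι → Prop) [DecidablePred c] (v : ι → σ)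
    (hv : Function.Injective v) (i j k l : ι) :
    P (R := R) c v i j * P c v k l - P c v k l * P c v i j
      = (if j = k then P c v i l else 0) - (if l = i then P c v k j else 0) := by
  by_cases hci : c i <;> by_cases hcj : c j <;> by_cases hck : c k <;> by_cases hcl : c l <;>
    simp only [P, hci, hcj, hck, hcl, if_true, if_false]
  -- 1 TTTT
  · rw [br_cc _ _ _ _ (central (R := R) (σ := σ) i j) (central k l), GA]
    simp only [pdX hv, mul_ite, ite_mul, mul_one, mul_zero, one_mul, zero_mul,
      apply_ite (M (R := R) (σ := σ)), M_zero]
    by_cases hil : i = l <;> by_cases hkj : k = j <;>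
      simp_all [eq_comm] <;> abel
  -- 2 TTTF
  · rw [br_cl _ _ _ (central (R := R) (σ := σ) i j), GB]
    try simp only [pdX hv, pderiv_mul, pd_ite, map_zero, pderiv_one, mul_ite, ite_mul,
      mul_one, mul_zero, one_mul, zero_mul, ite_self, add_zero, zero_add,
      apply_ite (M (R := R) (σ := σ)), M_zero, M_one]
    try split_ifs <;> subst_vars <;>
      (try simp_all [Dcomm, mul_comm, pdX hv, M_zero, M_one, pd_ite]) <;> (try abel)
  -- 3 TTFT
  · rw [br_cn _ _ _ (central (R := R) (σ := σ) i j), GC]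
    try simp only [pdX hv, pderiv_mul, pd_ite, map_zero, pderiv_one, mul_ite, ite_mul,
      mul_one, mul_zero, one_mul, zero_mul, ite_self, add_zero, zero_add,
      apply_ite (M (R := R) (σ := σ)), M_zero, M_one]
    try split_ifs <;> subst_vars <;>
      (try simp_all [Dcomm, mul_comm, pdX hv, M_zero, M_one, pd_ite]) <;> (try abel)
  -- 4 TTFF
  · rw [br_cl _ _ _ (central (R := R) (σ := σ) i j), GA]
    try simp only [pdX hv, pderiv_mul, pd_ite, map_zero, pderiv_one, mul_ite, ite_mul,
      mul_one, mul_zero, one_mul, zero_mul, ite_self, add_zero, zero_add,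
      apply_ite (M (R := R) (σ := σ)), M_zero, M_one]
    try split_ifs <;> subst_vars <;>
      (try simp_all [Dcomm, mul_comm, pdX hv, M_zero, M_one, pd_ite]) <;> (try abel)
  -- 5 TFTT
  · rw [br_cr _ _ _ (central (R := R) (σ := σ) k l), ← neg_sub, GB]
    try simp only [pdX hv, pderiv_mul, pd_ite, map_zero, pderiv_one, mul_ite, ite_mul,
      mul_one, mul_zero, one_mul, zero_mul, ite_self, add_zero, zero_add,
      apply_ite (M (R := R) (σ := σ)), M_zero, M_one]
    try split_ifs <;> subst_vars <;>
      (try simp_all [Dcomm, mul_comm, pdX hv, M_zero, M_one, pd_ite]) <;> (try abel)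
  -- 6 TFTF
  · rw [GF]
    try simp only [pdX hv, pderiv_mul, pd_ite, map_zero, pderiv_one, mul_ite, ite_mul,
      mul_one, mul_zero, one_mul, zero_mul, ite_self, add_zero, zero_add,
      apply_ite (M (R := R) (σ := σ)), M_zero, M_one]
    try split_ifs <;> subst_vars <;>
      (try simp_all [Dcomm, mul_comm, pdX hv, M_zero, M_one, pd_ite]) <;> (try abel)
  -- 7 TFFT
  · rw [br_nr, ← neg_sub, GD]
    try simp only [pdX hv, pderiv_mul, pd_ite, map_zero, pderiv_one, mul_ite, ite_mul,
      mul_one, mul_zero, one_mul, zero_mul, ite_self, add_zero, zero_add,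
      apply_ite (M (R := R) (σ := σ)), M_zero, M_one]
    try split_ifs <;> subst_vars <;>
      (try simp_all [Dcomm, mul_comm, pdX hv, M_zero, M_one, pd_ite]) <;> (try abel)
  -- 8 TFFF
  · rw [GB]
    try simp only [pdX hv, pderiv_mul, pd_ite, map_zero, pderiv_one, mul_ite, ite_mul,
      mul_one, mul_zero, one_mul, zero_mul, ite_self, add_zero, zero_add,
      apply_ite (M (R := R) (σ := σ)), M_zero, M_one]
    try split_ifs <;> subst_vars <;>
      (try simp_all [Dcomm, mul_comm, pdX hv, M_zero, M_one, pd_ite]) <;> (try abel)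
  -- 9 FTTT
  · rw [br_nc _ _ _ (central (R := R) (σ := σ) k l), ← neg_sub, GC]
    try simp only [pdX hv, pderiv_mul, pd_ite, map_zero, pderiv_one, mul_ite, ite_mul,
      mul_one, mul_zero, one_mul, zero_mul, ite_self, add_zero, zero_add,
      apply_ite (M (R := R) (σ := σ)), M_zero, M_one]
    try split_ifs <;> subst_vars <;>
      (try simp_all [Dcomm, mul_comm, pdX hv, M_zero, M_one, pd_ite]) <;> (try abel)
  -- 10 FTTF
  · rw [br_nl, GD]
    try simp only [pdX hv, pderiv_mul, pd_ite, map_zero, pderiv_one, mul_ite, ite_mul,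
      mul_one, mul_zero, one_mul, zero_mul, ite_self, add_zero, zero_add,
      apply_ite (M (R := R) (σ := σ)), M_zero, M_one]
    try split_ifs <;> subst_vars <;>
      (try simp_all [Dcomm, mul_comm, pdX hv, M_zero, M_one, pd_ite]) <;> (try abel)
  -- 11 FTFT
  · rw [br_nn, GE]
    try simp only [pdX hv, pderiv_mul, pd_ite, map_zero, pderiv_one, mul_ite, ite_mul,
      mul_one, mul_zero, one_mul, zero_mul, ite_self, add_zero, zero_add,
      apply_ite (M (R := R) (σ := σ)), M_zero, M_one]
    try split_ifs <;> subst_vars <;>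
      (try simp_all [Dcomm, mul_comm, pdX hv, M_zero, M_one, pd_ite]) <;> (try abel)
  -- 12 FTFF
  · rw [br_nl, GC]
    try simp only [pdX hv, pderiv_mul, pd_ite, map_zero, pderiv_one, mul_ite, ite_mul,
      mul_one, mul_zero, one_mul, zero_mul, ite_self, add_zero, zero_add,
      apply_ite (M (R := R) (σ := σ)), M_zero, M_one]
    try split_ifs <;> subst_vars <;>
      (try simp_all [Dcomm, mul_comm, pdX hv, M_zero, M_one, pd_ite]) <;> (try abel)
  -- 13 FFTT
  · rw [br_cr _ _ _ (central (R := R) (σ := σ) k l), GA]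
    try simp only [pdX hv, pderiv_mul, pd_ite, map_zero, pderiv_one, mul_ite, ite_mul,
      mul_one, mul_zero, one_mul, zero_mul, ite_self, add_zero, zero_add,
      apply_ite (M (R := R) (σ := σ)), M_zero, M_one]
    try split_ifs <;> subst_vars <;>
      (try simp_all [Dcomm, mul_comm, pdX hv, M_zero, M_one, pd_ite]) <;> (try abel)
  -- 14 FFTF
  · rw [← neg_sub, GB]
    try simp only [pdX hv, pderiv_mul, pd_ite, map_zero, pderiv_one, mul_ite, ite_mul,
      mul_one, mul_zero, one_mul, zero_mul, ite_self, add_zero, zero_add,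
      apply_ite (M (R := R) (σ := σ)), M_zero, M_one]
    try split_ifs <;> subst_vars <;>
      (try simp_all [Dcomm, mul_comm, pdX hv, M_zero, M_one, pd_ite]) <;> (try abel)
  -- 15 FFFT
  · rw [br_nr, ← neg_sub, GC]
    try simp only [pdX hv, pderiv_mul, pd_ite, map_zero, pderiv_one, mul_ite, ite_mul,
      mul_one, mul_zero, one_mul, zero_mul, ite_self, add_zero, zero_add,
      apply_ite (M (R := R) (σ := σ)), M_zero, M_one]
    try split_ifs <;> subst_vars <;>
      (try simp_all [Dcomm, mul_comm, pdX hv, M_zero, M_one, pd_ite]) <;> (try abel)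
  -- 16 FFFF
  · rw [GA]
    try simp only [pdX hv, pderiv_mul, pd_ite, map_zero, pderiv_one, mul_ite, ite_mul,
      mul_one, mul_zero, one_mul, zero_mul, ite_self, add_zero, zero_add,
      apply_ite (M (R := R) (σ := σ)), M_zero, M_one]
    try split_ifs <;> subst_vars <;>
      (try simp_all [Dcomm, mul_comm, pdX hv, M_zero, M_one, pd_ite]) <;> (try abel)

set_option maxHeartbeats 1000000 in
theorem P_commute {ι κ : Type*} [DecidableEq ι] [DecidableEq κ]
    (c₁ : ι → Prop) [DecidablePred c₁] (v₁ : ι → σ)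
    (c₂ : κ → Prop) [DecidablePred c₂] (v₂ : κ → σ)
    (h : ∀ a b, v₁ a ≠ v₂ b) (i j : ι) (k l : κ) :
    Commute (P (R := R) c₁ v₁ i j) (P (R := R) c₂ v₂ k l) := by
  have hM : ∀ p q : MvPolynomial σ R, Commute (M (R := R) p) (M q) := fun p q => by
    unfold Commute SemiconjBy; rw [MmulM, MmulM, mul_comm]
  have hDM : ∀ (a : ι) (q), pderiv (v₁ a) q = 0 →
      Commute (D (R := R) (v₁ a)) (M q) := fun a q hq => by
    unfold Commute SemiconjBy; rw [DM, hq, M_zero, add_zero]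
  have hMD : ∀ (b : κ) (p), pderiv (v₂ b) p = 0 →
      Commute (M (R := R) p) (D (v₂ b)) := fun b p hp => by
    unfold Commute SemiconjBy; rw [DM, hp, M_zero, add_zero]
  have hDD : ∀ (a : ι) (b : κ), Commute (D (R := R) (v₁ a)) (D (v₂ b)) :=
    fun a b => Dcomm _ _
  have hpd1 : ∀ (a : ι) (b : κ), pderiv (v₁ a) (X (v₂ b) : MvPolynomial σ R) = 0 :=
    fun a b => pderiv_X_of_ne (Ne.symm (h a b))
  have hpd2 : ∀ (b : κ) (a : ι), pderiv (v₂ b) (X (v₁ a) : MvPolynomial σ R) = 0 :=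
    fun b a => pderiv_X_of_ne (h a b)
  have hpd1m : ∀ (a : ι) (b c : κ),
      pderiv (v₁ a) (X (v₂ b) * X (v₂ c) : MvPolynomial σ R) = 0 := fun a b c => by
    rw [pderiv_mul, hpd1, hpd1, mul_zero, zero_mul, add_zero]
  have hpd2m : ∀ (b : κ) (a c : ι),
      pderiv (v₂ b) (X (v₁ a) * X (v₁ c) : MvPolynomial σ R) = 0 := fun b a c => by
    rw [pderiv_mul, hpd2, hpd2, mul_zero, zero_mul, add_zero]
  have right : ∀ z : Module.End R (MvPolynomial σ R),
      (∀ b, Commute z (D (v₂ b))) → (∀ b, Commute z (M (X (v₂ b)))) →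
      (∀ b c, Commute z (M (X (v₂ b) * X (v₂ c)))) →
      Commute z (P c₂ v₂ k l) := by
    intro z ha hb hc
    unfold P
    split_ifs
    · exact (((hb l).mul_right (ha k)).neg_right).sub_right (Commute.one_right z)
    · exact (((hb l).mul_right (ha k)).neg_right).sub_right (Commute.zero_right z)
    · exact (ha k).mul_right (ha l)
    · exact (hc k l).neg_right
    · exact (hb k).mul_right (ha l)
  have left : ∀ z : Module.End R (MvPolynomial σ R),
      (∀ a, Commute (D (R := R) (v₁ a)) z) → (∀ a, Commute (M (R := R) (X (v₁ a))) z) →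
      (∀ a c, Commute (M (R := R) (X (v₁ a) * X (v₁ c))) z) →
      Commute (P c₁ v₁ i j) z := by
    intro z ha hb hc
    unfold P
    split_ifs
    · exact (((hb j).mul_left (ha i)).neg_left).sub_left (Commute.one_left z)
    · exact (((hb j).mul_left (ha i)).neg_left).sub_left (Commute.zero_left z)
    · exact (ha i).mul_left (ha j)
    · exact (hc i j).neg_left
    · exact (hb i).mul_left (ha j)
  exact left _
    (fun a => right _ (fun b => hDD a b) (fun b => hDM a _ (hpd1 a b))
      (fun b c => hDM a _ (hpd1m a b c)))
    (fun a => right _ (fun b => hMD b _ (hpd2 b a)) (fun b => hM _ _) (fun b c => hM _ _))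
    (fun a c => right _ (fun b => hMD b _ (hpd2m b a c)) (fun b => hM _ _)
      (fun b c' => hM _ _))

theorem split_bracket {S : Type*} [Ring S] (A1 B1 A2 B2 : S)
    (h1 : A1 * B2 = B2 * A1) (h2 : A2 * B1 = B1 * A2) :
    (A1 - B1) * (A2 - B2) - (A2 - B2) * (A1 - B1)
      = (A1 * A2 - A2 * A1) + (B1 * B2 - B2 * B1) := by
  simp only [sub_mul, mul_sub]
  rw [h1, h2]; abel

end P
end Aux

namespace Stmt2

variable (F : Type*) [Field F] [CharZero F] (n n₁ n₂ : ℕ)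

theorem Ex_eq (i j : Fin n) :
    Ex F n n₁ i j = Aux.P (R := F) (fun a : Fin n => (a : ℕ) < n₁) Sum.inl i j := rfl

theorem Ey_eq (i j : Fin n) :
    Ey F n n₂ i j = Aux.P (R := F) (fun a : Fin n => ¬ (a : ℕ) < n₂) Sum.inr i j := by
  unfold Ey Aux.P
  by_cases hi : (i : ℕ) < n₂ <;> by_cases hj : (j : ℕ) < n₂ <;> simp only [hi, hj, if_true, if_false] <;> rfl

theorem Ex_bracket (i j k l : Fin n) :
    Ex F n n₁ i j * Ex F n n₁ k l - Ex F n n₁ k l * Ex F n n₁ i j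
      = (if j = k then Ex F n n₁ i l else 0) - (if l = i then Ex F n n₁ k j else 0) := by
  simp only [Ex_eq]
  exact Aux.P_bracket _ _ Sum.inl_injective i j k l

theorem Ey_bracket (i j k l : Fin n) :
    Ey F n n₂ i j * Ey F n n₂ k l - Ey F n n₂ k l * Ey F n n₂ i j
      = (if j = k then Ey F n n₂ i l else 0) - (if l = i then Ey F n n₂ k j else 0) := by
  simp only [Ey_eq]
  exact Aux.P_bracket _ _ Sum.inr_injective i j k l

theorem commute_Ex_Ey (i j k l : Fin n) :
    Commute (Ex F n n₁ i j) (Ey F n n₂ k l) := by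
  rw [Ex_eq, Ey_eq]
  exact Aux.P_commute _ _ _ _ (fun a b => Sum.inl_ne_inr) i j k l

/-- `π` is a Lie algebra homomorphism on the matrix units: since
`[E_{i,j}, E_{k,l}] = δ_{jk} E_{i,l} − δ_{li} E_{k,j}`, we have
`π([E_{i,j},E_{k,l}]) = [π(E_{i,j}), π(E_{k,l})]` for all `i ≠ j`, `k ≠ l`. -/
theorem pi_lie_hom (h₁ : 1 ≤ n₁) (h₁₂ : n₁ ≤ n₂) (h₂ : n₂ ≤ n)
    (i j k l : Fin n) (hij : i ≠ j) (hkl : k ≠ l) :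
    ((if j = k then π F n n₁ n₂ i l else 0) - (if l = i then π F n n₁ n₂ k j else 0)) =
      π F n n₁ n₂ i j * π F n n₁ n₂ k l - π F n n₁ n₂ k l * π F n n₁ n₂ i j := by
  have ExB := fun a b e f => Ex_bracket F n n₁ a b e f
  have EyB := fun a b e f => Ey_bracket F n n₂ a b e f
  unfold π
  rw [Aux.split_bracket _ _ _ _ (commute_Ex_Ey F n n₁ n₂ i j l k).eq
    (commute_Ex_Ey F n n₁ n₂ k l j i).eq, ExB i j k l, EyB j i l k]
  by_cases hjk : j = k <;> by_cases hli : l = i <;>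
    simp_all [eq_comm] <;> abel

end Stmt2
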